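/- Suppose f : E → ℝ ∪ {+∞} is proper, lower semicontinuous, and convex, x₀ ∈ E, and x* is a minimizer over E of the function x ↦ f(x) + Δ(x, x₀). Then for all x with f(x) finite, f(x) + Δ(x, x₀) ≥ f(x*) + Δ(x*, x₀) + Δ(x, x*). -/

import Mathlib

noncomputable section

open scoped BigOperators

/-- Bregman divergence induced by `d`. -/
def breg {E : Type*} [NormedAddCommGroup E] [NormedSpace ℝ E]
    (d : E → ℝ) (x y : E) : ℝ :=
  d x - d y - fderiv ℝ d y (x - y)

/-- `d` is `σ`-strongly convex with respect to the norm `‖·‖`. -/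
def StrongConvexOnNorm {E : Type*} [NormedAddCommGroup E] [NormedSpace ℝ E]
    (σ : ℝ) (d : E → ℝ) : Prop :=
  ∀ x y : E, d x ≥ d y + fderiv ℝ d y (x - y) + σ / 2 * ‖x - y‖ ^ 2

/-- `g` is a subgradient of the extended-real-valued function `h` at `y`. -/
def IsSubgradE {E : Type*} [NormedAddCommGroup E] [NormedSpace ℝ E]
    (h : E → EReal) (y : E) (g : E →L[ℝ] ℝ) : Prop :=
  ∀ x, h x ≥ h y + ((g (x - y) : ℝ) : EReal)

/-- `h` is `lam`-strongly convex with respect to `d` (extended-real-valued version). -/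
def ScWrtE {E : Type*} [NormedAddCommGroup E] [NormedSpace ℝ E]
    (d : E → ℝ) (lam : ℝ) (h : E → EReal) : Prop :=
  ∀ y : E, h y ≠ ⊤ → ∀ g : E →L[ℝ] ℝ, IsSubgradE h y g →
    ∀ x, h x ≥ h y + ((g (x - y) + lam * breg d x y : ℝ) : EReal)

/-- `f` is `lam`-strongly convex with respect to `d` (real-valued version). -/
def ScWrtR {E : Type*} [NormedAddCommGroup E] [NormedSpace ℝ E]
    (d : E → ℝ) (lam : ℝ) (f : E → ℝ) : Prop :=
  ∀ y : E, ∀ g : E →L[ℝ] ℝ, (∀ x, f x ≥ f y + g (x - y)) →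
    ∀ x, f x ≥ f y + g (x - y) + lam * breg d x y

/-- Convexity for extended-real-valued functions. -/
def ConvexE {E : Type*} [NormedAddCommGroup E] [NormedSpace ℝ E]
    (h : E → EReal) : Prop :=
  ∀ x y : E, ∀ a b : ℝ, 0 ≤ a → 0 ≤ b → a + b = 1 →
    h (a • x + b • y) ≤ ((a : ℝ) : EReal) * h x + ((b : ℝ) : EReal) * h y

/-- The lower model `ℓ_f(x; y, lam1)`. -/
def ellf {E : Type*} [NormedAddCommGroup E] [NormedSpace ℝ E]
    (d : E → ℝ) (f : E → ℝ) (lam1 : ℝ) (x y : E) : ℝ :=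
  f y + fderiv ℝ f y (x - y) + lam1 * breg d x y


/-- if `x*` minimizes `x ↦ f x + Δ(x, x₀)` over `E`, then for all `x` with
`f x` finite, `f x + Δ(x, x₀) ≥ f x* + Δ(x*, x₀) + Δ(x, x*)`. -/
theorem stmt3 {E : Type*} [NormedAddCommGroup E] [NormedSpace ℝ E] [FiniteDimensional ℝ E]
    (σ : ℝ) (hσ : 0 < σ)
    (d : E → ℝ) (hddiff : Differentiable ℝ d) (hdconv : ConvexOn ℝ Set.univ d)
    (hdsc : StrongConvexOnNorm σ d)
    (f : E → EReal) (hne : ∀ x, f x ≠ ⊥) (hprop : ∃ x, f x ≠ ⊤)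
    (hlsc : LowerSemicontinuous f) (hconv : ConvexE f)
    (x₀ xstar : E)
    (hmin : ∀ x : E, f xstar + ((breg d xstar x₀ : ℝ) : EReal) ≤
      f x + ((breg d x x₀ : ℝ) : EReal)) :
    ∀ x : E, f x ≠ ⊤ →
      f x + ((breg d x x₀ : ℝ) : EReal) ≥
        f xstar + ((breg d xstar x₀ : ℝ) : EReal) + ((breg d x xstar : ℝ) : EReal) := by

  intro x hx
  obtain ⟨z, hz⟩ := hprop
  -- f xstar is finite
  have hxsne : f xstar ≠ ⊤ := by
    intro h
    have h1 := hmin z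
    rw [h, EReal.top_add_of_ne_bot (by simp)] at h1
    have h2 : f z + ((breg d z x₀ : ℝ) : EReal) < ⊤ :=
      EReal.add_lt_top hz (EReal.coe_ne_top _)
    exact absurd h1 (not_le.mpr h2)
  set a := (f xstar).toReal with ha_def
  set b := (f x).toReal with hb_def
  have ha : f xstar = (a : EReal) := (EReal.coe_toReal hxsne (hne xstar)).symm
  have hb : f x = (b : EReal) := (EReal.coe_toReal hx (hne x)).symm
  set v := x - xstar with hv
  set g0 := fderiv ℝ d x₀ with hg0
  set gs := fderiv ℝ d xstar with hgs
  -- key real inequality for t ∈ (0,1]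
  have key : ∀ t ∈ Set.Ioc (0:ℝ) 1,
      a + breg d xstar x₀ ≤ (1 - t) * a + t * b + breg d (xstar + t • v) x₀ := by
    intro t ht
    have hxt : (1 - t) • xstar + t • x = xstar + t • v := by
      rw [hv, smul_sub, sub_smul, one_smul]; abel
    have hcv := hconv xstar x (1 - t) t (by linarith [ht.2]) (le_of_lt ht.1) (by ring)
    rw [ha, hb, hxt] at hcv
    have hcv' : f (xstar + t • v) ≤ (((1 - t) * a + t * b : ℝ) : EReal) := by
      calc f (xstar + t • v) ≤ (((1-t):ℝ) : EReal) * (a : EReal) + ((t:ℝ) : EReal) * (b : EReal) := hcv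
        _ = (((1 - t) * a + t * b : ℝ) : EReal) := by norm_cast
    have hm := hmin (xstar + t • v)
    rw [ha] at hm
    have : ((a + breg d xstar x₀ : ℝ) : EReal) ≤
        (((1 - t) * a + t * b + breg d (xstar + t • v) x₀ : ℝ) : EReal) := by
      calc ((a + breg d xstar x₀ : ℝ) : EReal)
          = (a : EReal) + ((breg d xstar x₀ : ℝ) : EReal) := by rw [EReal.coe_add]
        _ ≤ f (xstar + t • v) + ((breg d (xstar + t • v) x₀ : ℝ) : EReal) := hm
        _ ≤ (((1 - t) * a + t * b : ℝ) : EReal) + ((breg d (xstar + t • v) x₀ : ℝ) : EReal) := by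
            exact add_le_add hcv' le_rfl
        _ = (((1 - t) * a + t * b + breg d (xstar + t • v) x₀ : ℝ) : EReal) := by norm_cast
    exact_mod_cast this
  -- derivative of t ↦ d (xstar + t • v) at 0
  have hder : HasDerivAt (fun t : ℝ => d (xstar + t • v)) (gs v) 0 := by
    have h1 : HasFDerivAt d gs xstar := (hddiff xstar).hasFDerivAt
    have h2 : HasDerivAt (fun t : ℝ => xstar + t • v) v 0 := by
      simpa using ((hasDerivAt_id (0:ℝ)).smul_const v).const_add xstar
    have h1' : HasFDerivAt d gs (xstar + (0:ℝ) • v) := by simpa using h1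
    exact h1'.comp_hasDerivAt 0 h2
  have hslope := hasDerivAt_iff_tendsto_slope.mp hder
  have hslope' : Filter.Tendsto (slope (fun t : ℝ => d (xstar + t • v)) 0)
      (nhdsWithin 0 (Set.Ioi 0)) (nhds (gs v)) :=
    hslope.mono_left (nhdsWithin_mono 0 (fun y hy => ne_of_gt hy))
  have hev : ∀ᶠ t in nhdsWithin (0:ℝ) (Set.Ioi 0),
      a - b + g0 v ≤ slope (fun t : ℝ => d (xstar + t • v)) 0 t := by
    filter_upwards [Ioc_mem_nhdsGT_of_mem (Set.left_mem_Ico.mpr one_pos)] with t ht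
    have hk := key t ht
    have hlin : g0 (xstar + t • v - x₀) = g0 (xstar - x₀) + t * g0 v := by
      have : xstar + t • v - x₀ = (xstar - x₀) + t • v := by abel
      rw [this, map_add, map_smul]; rfl
    simp only [breg, ← hg0] at hk
    rw [hlin] at hk
    rw [slope_def_field]
    simp only [slope_def_field, zero_smul, add_zero, sub_zero]
    rw [le_div_iff₀ ht.1]
    nlinarith [hk]
  have hfinal : a - b + g0 v ≤ gs v := ge_of_tendsto hslope' hev
  -- conclude
  rw [ha, hb]
  have hgoal : (a + breg d xstar x₀ + breg d x xstar : ℝ) ≤ (b + breg d x x₀ : ℝ) := by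
    have hlin2 : g0 (x - x₀) = g0 (xstar - x₀) + g0 v := by
      rw [← map_add]; congr 1; rw [hv]; abel
    simp only [breg, ← hg0, ← hgs, ← hv]
    nlinarith [hlin2]
  calc (b : EReal) + ((breg d x x₀ : ℝ) : EReal)
      = ((b + breg d x x₀ : ℝ) : EReal) := by rw [EReal.coe_add]
    _ ≥ ((a + breg d xstar x₀ + breg d x xstar : ℝ) : EReal) := by exact_mod_cast hgoal
    _ = (a : EReal) + ((breg d xstar x₀ : ℝ) : EReal) + ((breg d x xstar : ℝ) : EReal) := by
        rw [EReal.coe_add, EReal.coe_add]
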